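/- Let a ∈ ℝ, λ > 1 and c ≥ 0. Then the function w(t) = c / (A(t)·(1 + c·B(t))) is defined for all t ≥ 0, satisfies w(0) = c and the Riccati equation w'(t) = −w(t)² − a·w(t)/(1+t)^λ for all t ≥ 0, and obeys 0 ≤ w(t) ≤ c·exp(|a|/(λ−1)) for all t ≥ 0. In particular, the solution of this Riccati equation with nonnegative initial data exists globally in time. (This corresponds to the absence of shock formation for damped Burgers data with nonnegative slope.) -/

import Mathlib

/-- `A(t) = exp((a/(λ−1))·(1 − (1+t)^(1−λ)))`, i.e. `A(t) = exp(∫₀ᵗ a/(1+s)^λ ds)`. -/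
noncomputable def dampA (a lam t : ℝ) : ℝ :=
  Real.exp (a / (lam - 1) * (1 - (1 + t) ^ (1 - lam)))

/-- `B(t) = ∫₀ᵗ A(s)⁻¹ ds = ∫₀ᵗ exp((a/(λ−1))·((1+s)^(1−λ) − 1)) ds`. -/
noncomputable def dampB (a lam t : ℝ) : ℝ :=
  ∫ s in (0:ℝ)..t, Real.exp (a / (lam - 1) * ((1 + s) ^ (1 - lam) - 1))

/-- The slope `w(t) = c/(A(t)·(1 + c·B(t)))` along a characteristic with nonnegative
initial slope `c ≥ 0`. -/
noncomputable def dampWpos (a lam c t : ℝ) : ℝ :=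
  c / (dampA a lam t * (1 + c * dampB a lam t))

theorem stmt8 (a lam c : ℝ) (hlam : 1 < lam) (hc : 0 ≤ c) :
    (∀ t : ℝ, 0 ≤ t → 0 < dampA a lam t * (1 + c * dampB a lam t)) ∧
    dampWpos a lam c 0 = c ∧
    (∀ t : ℝ, 0 ≤ t →
      HasDerivAt (dampWpos a lam c)
        (-(dampWpos a lam c t) ^ 2 - a * dampWpos a lam c t / (1 + t) ^ lam) t) ∧
    (∀ t : ℝ, 0 ≤ t →
      0 ≤ dampWpos a lam c t ∧
      dampWpos a lam c t ≤ c * Real.exp (|a| / (lam - 1))) := by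
  set k := a / (lam - 1) with hk
  set g : ℝ → ℝ := fun s => Real.exp (k * ((1 + s) ^ (1 - lam) - 1)) with hg
  have hA : ∀ t, 0 < dampA a lam t := fun t => Real.exp_pos _
  -- continuity of g on Ioi (-1)
  have hgca : ∀ s : ℝ, -1 < s → ContinuousAt g s := by
    intro s hs
    have h1 : ContinuousAt (fun s : ℝ => (1 + s) ^ (1 - lam)) s := by
      have : ContinuousAt (fun x : ℝ => x ^ (1 - lam)) (1 + s) :=
        Real.continuousAt_rpow_const _ _ (Or.inl (by linarith))
      exact this.comp (by fun_prop)
    exact Real.continuous_exp.continuousAt.comp ((h1.sub continuousAt_const).const_mul k)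
  have hgcOn : ContinuousOn g (Set.Ioi (-1 : ℝ)) := fun s hs =>
    (hgca s hs).continuousWithinAt
  -- nonnegativity of B
  have hBnn : ∀ t : ℝ, 0 ≤ t → 0 ≤ dampB a lam t := by
    intro t ht
    exact intervalIntegral.integral_nonneg ht fun x _ => (Real.exp_pos _).le
  have hpos : ∀ t : ℝ, 0 ≤ t → 0 < dampA a lam t * (1 + c * dampB a lam t) := by
    intro t ht
    have := mul_nonneg hc (hBnn t ht)
    exact mul_pos (hA t) (by linarith)
  refine ⟨hpos, ?_, ?_, ?_⟩
  · -- w(0) = c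
    simp [dampWpos, dampA, dampB, Real.rpow_natCast]
  · -- Riccati equation
    intro t ht
    have hbt : (0:ℝ) < 1 + t := by linarith
    -- derivative of A
    have hφ : HasDerivAt (fun s : ℝ => (1 + s) ^ (1 - lam))
        ((1 - lam) * (1 + t) ^ (-lam)) t := by
      have h1 : HasDerivAt (fun s : ℝ => 1 + s) 1 t := by
        simpa using (hasDerivAt_id t).const_add (1:ℝ)
      have h2 := (Real.hasDerivAt_rpow_const (p := 1 - lam) (Or.inl hbt.ne')).comp t h1
      have h3 : (1:ℝ) - lam - 1 = -lam := by ring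
      rw [h3, mul_one] at h2
      exact h2
    have hA' : HasDerivAt (dampA a lam) (dampA a lam t * (a * (1 + t) ^ (-lam))) t := by
      have hinner : HasDerivAt (fun s : ℝ => k * (1 - (1 + s) ^ (1 - lam)))
          (a * (1 + t) ^ (-lam)) t := by
        have := ((hasDerivAt_const t (1:ℝ)).sub hφ).const_mul k
        have hne : lam - (1:ℝ) ≠ 0 := by linarith
        refine this.congr_deriv ?_
        rw [hk, div_mul_eq_mul_div, div_eq_iff hne]
        ring
      have := hinner.exp
      exact this
    -- derivative of B
    have hB' : HasDerivAt (dampB a lam) (g t) t := by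
      have hInt : IntervalIntegrable g MeasureTheory.volume 0 t := by
        apply ContinuousOn.intervalIntegrable
        apply hgcOn.mono
        intro x hx
        rw [Set.uIcc_of_le ht] at hx
        simp only [Set.mem_Ioi]
        linarith [hx.1]
      have hmeas : StronglyMeasurableAtFilter g (nhds t) :=
        hgcOn.stronglyMeasurableAtFilter isOpen_Ioi _ (by simpa using (by linarith : (-1:ℝ) < t))
      exact intervalIntegral.integral_hasDerivAt_right hInt hmeas (hgca t (by linarith))
    -- derivative of D = A * (1 + c*B)
    set At := dampA a lam t with hAt
    set Bt := dampB a lam t with hBt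
    have hD : HasDerivAt (fun s => dampA a lam s * (1 + c * dampB a lam s))
        (At * (a * (1 + t) ^ (-lam)) * (1 + c * Bt) + At * (c * g t)) t :=
      hA'.mul (((hB'.const_mul c).const_add 1))
    have hDne : At * (1 + c * Bt) ≠ 0 := (hpos t ht).ne'
    have hw : HasDerivAt (dampWpos a lam c)
        ((0 * (At * (1 + c * Bt)) - c * (At * (a * (1 + t) ^ (-lam)) * (1 + c * Bt) + At * (c * g t)))
          / (At * (1 + c * Bt)) ^ 2) t := by
      exact (hasDerivAt_const t c).div hD hDne
    convert hw using 1
    -- algebra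
    have hgA : g t * At = 1 := by
      rw [hg, hAt, dampA, ← Real.exp_add]
      norm_num
      ring_nf
      rw [hk]; ring
    have hP : (0:ℝ) < (1 + t) ^ lam := Real.rpow_pos_of_pos hbt lam
    have hPinv : (1 + t) ^ (-lam) = ((1 + t) ^ lam)⁻¹ := Real.rpow_neg hbt.le lam
    rw [dampWpos, ← hAt, ← hBt, hPinv]
    have hAne : At ≠ 0 := (hA t).ne'
    have h1cB : (1 : ℝ) + c * Bt ≠ 0 := by
      have := mul_nonneg hc (hBnn t ht); positivity
    have hg' : g t = At⁻¹ := eq_inv_of_mul_eq_one_left hgA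
    rw [hg']
    field_simp
    ring
  · -- bounds
    intro t ht
    have hbt : (0:ℝ) < 1 + t := by linarith
    have hD := hpos t ht
    constructor
    · exact div_nonneg hc hD.le
    · have hφpos : (0:ℝ) < (1 + t) ^ (1 - lam) := Real.rpow_pos_of_pos hbt _
      have hφle : (1 + t) ^ (1 - lam) ≤ 1 :=
        Real.rpow_le_one_of_one_le_of_nonpos (by linarith) (by linarith)
      have hexp : Real.exp (-(k * (1 - (1 + t) ^ (1 - lam)))) ≤ Real.exp (|a| / (lam - 1)) := by
        apply Real.exp_le_exp.2
        have h1 : |k| = |a| / (lam - 1) := by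
          rw [hk, abs_div, abs_of_pos (by linarith : (0:ℝ) < lam - 1)]
        have h2 : -(k * (1 - (1 + t) ^ (1 - lam))) ≤ |k| * (1 - (1 + t) ^ (1 - lam)) := by
          have h3 : 0 ≤ 1 - (1 + t) ^ (1 - lam) := by linarith
          nlinarith [neg_abs_le k]
        have h4 : |k| * (1 - (1 + t) ^ (1 - lam)) ≤ |k| * 1 := by
          apply mul_le_mul_of_nonneg_left _ (abs_nonneg k)
          linarith
        rw [← h1]; linarith
      have step1 : dampWpos a lam c t ≤ c / dampA a lam t := by
        rw [dampWpos]
        apply div_le_div_of_nonneg_left hc (hA t)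
        calc dampA a lam t = dampA a lam t * 1 := by ring
          _ ≤ dampA a lam t * (1 + c * dampB a lam t) := by
              have := mul_nonneg hc (hBnn t ht)
              apply mul_le_mul_of_nonneg_left (by linarith) (hA t).le
      calc dampWpos a lam c t ≤ c / dampA a lam t := step1
        _ = c * Real.exp (-(k * (1 - (1 + t) ^ (1 - lam)))) := by
            rw [dampA, Real.exp_neg]; ring
        _ ≤ c * Real.exp (|a| / (lam - 1)) := mul_le_mul_of_nonneg_left hexp hc
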